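/- The projection $K_1 \times \cdots \times K_m \to K_1 \times \cdots \times K_{m-1}$ forgetting the last coordinate descends to a well-defined surjective map $p : F_m^\varphi \to F_{m-1}^\varphi$ on orbit spaces, $p([g_1,\dots,g_m]) = [g_1,\dots,g_{m-1}]$, and for every point $x \in F_{m-1}^\varphi$ the fiber $p^{-1}(x)$ is in bijection with the left coset space $K_m / Z_m$. -/

import Mathlib

/-- The "correction factor" appearing in the `ℓ`-th component of the right action of
`Z₁ × ⋯ × Zₘ` on `K₁ × ⋯ × Kₘ`: the product `∏_{j < ℓ} φⱼ^{(ℓ)}(zⱼ)⁻¹`, taken inside `K ℓ`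
(in increasing order of `j`; the factors lie in the abelian subgroup `T ℓ`). -/
def bottCorr {m : ℕ} (K : Fin m → Type*) [∀ j, Group (K j)]
    (Z T : ∀ j, Subgroup (K j))
    (φ : ∀ j l : Fin m, j < l → (↥(Z j) →* ↥(T l)))
    (z : ∀ j, Z j) (l : Fin m) : K l :=
  (((List.finRange m).map
    (fun j => if h : j < l then (((φ j l h (z j) : T l) : K l))⁻¹ else 1)).prod)

/-- The right action of `Z₁ × ⋯ × Zₘ` on `K₁ × ⋯ × Kₘ`:
`(g ⬝ z) ℓ = (∏_{j<ℓ} φⱼ^{(ℓ)}(zⱼ)⁻¹) · g_ℓ · z_ℓ`. -/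
def bottAct {m : ℕ} (K : Fin m → Type*) [∀ j, Group (K j)]
    (Z T : ∀ j, Subgroup (K j))
    (φ : ∀ j l : Fin m, j < l → (↥(Z j) →* ↥(T l)))
    (g : ∀ j, K j) (z : ∀ j, Z j) : ∀ j, K j :=
  fun l => bottCorr K Z T φ z l * g l * (z l : K l)


/-- The orbit relation of the right `Z₁ × ⋯ × Zₘ`-action on `K₁ × ⋯ × Kₘ`. -/
def bottRel {m : ℕ} (K : Fin m → Type*) [∀ j, Group (K j)]
    (Z T : ∀ j, Subgroup (K j))
    (φ : ∀ j l : Fin m, j < l → (↥(Z j) →* ↥(T l))) :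
    (∀ j, K j) → (∀ j, K j) → Prop :=
  fun g g' => ∃ z : ∀ j, Z j, bottAct K Z T φ g z = g'

section Aux
variable {m : ℕ} (K : Fin m → Type*) [∀ j, Group (K j)]
    (Z T : ∀ j, Subgroup (K j))
    (φ : ∀ j l : Fin m, j < l → (↥(Z j) →* ↥(T l)))

lemma bottCorr_mem (z : ∀ j, Z j) (l : Fin m) : bottCorr K Z T φ z l ∈ T l := by
  apply Subgroup.list_prod_mem
  intro x hx
  simp only [List.mem_map] at hx
  obtain ⟨j, -, rfl⟩ := hx
  split
  · exact (T l).inv_mem (SetLike.coe_mem _)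
  · exact (T l).one_mem

lemma bottCorr_eq_one (z : ∀ j, Z j) (l : Fin m)
    (h : ∀ j, j < l → z j = 1) : bottCorr K Z T φ z l = 1 := by
  apply List.prod_eq_one
  intro x hx
  simp only [List.mem_map] at hx
  obtain ⟨j, -, rfl⟩ := hx
  split
  next hj => rw [h j hj, map_one]; simp
  · rfl

lemma bottCorr_key (z : ∀ j, Z j) (l : Fin m) :
    bottCorr K Z T φ z l
      = ↑((((List.finRange m).map
          (fun j => if h : j < l then (φ j l h (z j))⁻¹ else 1)).prod : ↥(T l))) := by
  unfold bottCorr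
  rw [SubmonoidClass.coe_list_prod, List.map_map]
  refine congrArg List.prod (List.map_congr_left fun j _ => ?_)
  by_cases h : j < l <;> simp [h]

lemma bottCorr_mul (hT : ∀ l, ∀ a b : ↥(T l), a * b = b * a)
    (z w : ∀ j, Z j) (l : Fin m) :
    bottCorr K Z T φ (fun j => z j * w j) l
      = bottCorr K Z T φ z l * bottCorr K Z T φ w l := by
  letI : CommGroup ↥(T l) := { (inferInstance : Group ↥(T l)) with mul_comm := hT l }
  rw [bottCorr_key, bottCorr_key, bottCorr_key, ← Subgroup.coe_mul]
  congr 1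
  rw [← List.prod_map_mul]
  refine congrArg List.prod (List.map_congr_left fun j _ => ?_)
  by_cases h : j < l <;> simp [h, mul_inv, mul_comm]

lemma bottCorr_comm (hT : ∀ l, ∀ a b : ↥(T l), a * b = b * a)
    (z w : ∀ j, Z j) (l : Fin m) :
    bottCorr K Z T φ z l * bottCorr K Z T φ w l
      = bottCorr K Z T φ w l * bottCorr K Z T φ z l := by
  have := hT l ⟨_, bottCorr_mem K Z T φ z l⟩ ⟨_, bottCorr_mem K Z T φ w l⟩
  exact congrArg Subtype.val this

lemma bottAct_one (g : ∀ j, K j) : bottAct K Z T φ g (fun _ => 1) = g := by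
  funext l
  unfold bottAct
  rw [bottCorr_eq_one K Z T φ _ l (fun _ _ => rfl)]
  simp

lemma bottAct_mul (hT : ∀ l, ∀ a b : ↥(T l), a * b = b * a)
    (g : ∀ j, K j) (z w : ∀ j, Z j) :
    bottAct K Z T φ (bottAct K Z T φ g z) w = bottAct K Z T φ g (fun j => z j * w j) := by
  funext l
  show bottCorr K Z T φ w l * (bottCorr K Z T φ z l * g l * (z l : K l)) * (w l : K l)
      = bottCorr K Z T φ (fun j => z j * w j) l * g l * ((z l * w l : Z l) : K l)
  rw [bottCorr_mul K Z T φ hT, bottCorr_comm K Z T φ hT]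
  push_cast
  simp [mul_assoc]

lemma bottRel_equivalence (hT : ∀ l, ∀ a b : ↥(T l), a * b = b * a) :
    Equivalence (bottRel K Z T φ) := by
  constructor
  · exact fun g => ⟨fun _ => 1, bottAct_one K Z T φ g⟩
  · rintro g g' ⟨z, rfl⟩
    refine ⟨fun j => (z j)⁻¹, ?_⟩
    rw [bottAct_mul K Z T φ hT]
    simpa using bottAct_one K Z T φ g
  · rintro g g' g'' ⟨z, rfl⟩ ⟨w, rfl⟩
    exact ⟨fun j => z j * w j, (bottAct_mul K Z T φ hT g z w).symm⟩

end Aux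

section Restrict
variable {n : ℕ} (K : Fin (n+1) → Type*) [∀ j, Group (K j)]
    (Z T : ∀ j, Subgroup (K j))
    (φ : ∀ j l : Fin (n+1), j < l → (↥(Z j) →* ↥(T l)))

lemma bottCorr_castSucc (z : ∀ j, Z j) (l : Fin n) :
    bottCorr (fun j : Fin n => K j.castSucc) (fun j => Z j.castSucc) (fun j => T j.castSucc)
      (fun j l h => φ j.castSucc l.castSucc (Fin.castSucc_lt_castSucc_iff.mpr h))
      (fun j => z j.castSucc) l
    = bottCorr K Z T φ z l.castSucc := by
  unfold bottCorr
  rw [List.finRange_succ_last, List.map_append, List.prod_append, List.map_map]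
  have hlast : ¬ (Fin.last n < l.castSucc) := not_lt.mpr (Fin.castSucc_lt_last l).le
  simp only [List.map_cons, List.map_nil, List.prod_cons, List.prod_nil, dif_neg hlast,
    one_mul, mul_one]
  refine congrArg List.prod (List.map_congr_left fun j _ => ?_)
  by_cases h : j < l
  · simp [h, Function.comp, Fin.castSucc_lt_castSucc_iff]
  · simp [h, Function.comp, Fin.castSucc_lt_castSucc_iff]

lemma bottAct_castSucc (g : ∀ j, K j) (z : ∀ j, Z j) :
    (fun l : Fin n => bottAct K Z T φ g z l.castSucc)
      = bottAct (fun j : Fin n => K j.castSucc) (fun j => Z j.castSucc) (fun j => T j.castSucc)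
        (fun j l h => φ j.castSucc l.castSucc (Fin.castSucc_lt_castSucc_iff.mpr h))
        (fun j => g j.castSucc) (fun j => z j.castSucc) := by
  funext l
  show bottCorr K Z T φ z l.castSucc * g l.castSucc * (z l.castSucc : K l.castSucc) = _
  rw [← bottCorr_castSucc K Z T φ z l]
  rfl

end Restrict

/-- forgetting the last coordinate descends to a well-defined surjection
`p : F_m^φ → F_{m-1}^φ` on orbit spaces, and every fiber of `p` is in bijection with the
left coset space `K_m / Z_m`. -/
theorem bott_projection_fiber {n : ℕ} (K : Fin (n + 1) → Type*) [∀ j, Group (K j)]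
    (Z T : ∀ j, Subgroup (K j))
    (hT : ∀ l : Fin (n + 1), ∀ a b : ↥(T l), a * b = b * a)
    (φ : ∀ j l : Fin (n + 1), j < l → (↥(Z j) →* ↥(T l))) :
    ∃ p : Quot (bottRel K Z T φ) →
        Quot (bottRel (fun j : Fin n => K j.castSucc) (fun j => Z j.castSucc)
          (fun j => T j.castSucc)
          (fun j l h => φ j.castSucc l.castSucc (Fin.castSucc_lt_castSucc_iff.mpr h))),
      (∀ g : ∀ j, K j,
          p (Quot.mk _ g) = Quot.mk _ (fun j : Fin n => g j.castSucc)) ∧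
      Function.Surjective p ∧
      (∀ x, Nonempty ({y // p y = x} ≃ (K (Fin.last n) ⧸ Z (Fin.last n)))) := by
  classical
  set K' : Fin n → Type _ := fun j => K j.castSucc with hK'
  set Z' : ∀ j : Fin n, Subgroup (K' j) := fun j => Z j.castSucc with hZ'
  set T' : ∀ j : Fin n, Subgroup (K' j) := fun j => T j.castSucc with hT'
  set φ' : ∀ j l : Fin n, j < l → (↥(Z' j) →* ↥(T' l)) :=
    fun j l h => φ j.castSucc l.castSucc (Fin.castSucc_lt_castSucc_iff.mpr h) with hφ'
  have hT'c : ∀ l : Fin n, ∀ a b : ↥(T' l), a * b = b * a := fun l => hT l.castSucc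
  have equivBig := bottRel_equivalence K Z T φ hT
  have equivSmall := bottRel_equivalence K' Z' T' φ' hT'c
  -- the projection
  have hwd : ∀ g g' : ∀ j, K j, bottRel K Z T φ g g' →
      Quot.mk (bottRel K' Z' T' φ') (fun j : Fin n => g j.castSucc)
        = Quot.mk (bottRel K' Z' T' φ') (fun j : Fin n => g' j.castSucc) := by
    rintro g g' ⟨z, rfl⟩
    exact Quot.sound ⟨fun j => z j.castSucc, (bottAct_castSucc K Z T φ g z).symm⟩
  refine ⟨Quot.lift (fun g => Quot.mk _ (fun j : Fin n => g j.castSucc)) hwd,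
    fun g => rfl, ?_, ?_⟩
  · -- surjectivity
    intro x
    obtain ⟨g', rfl⟩ := Quot.exists_rep x
    refine ⟨Quot.mk _ (Fin.snoc g' 1), ?_⟩
    show Quot.mk _ (fun j : Fin n => Fin.snoc g' (1 : K (Fin.last n)) j.castSucc) = _
    congr 1
    funext j
    exact Fin.snoc_castSucc _ _ _
  · -- fibers
    intro x
    set p := Quot.lift (fun g : ∀ j, K j => Quot.mk (bottRel K' Z' T' φ') (fun j : Fin n => g j.castSucc))
      hwd with hp
    set g' : ∀ j : Fin n, K' j := Quot.out x with hg'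
    have hx : Quot.mk _ g' = x := Quot.out_eq x
    -- the map from K_last to the fiber
    have hmem : ∀ k : K (Fin.last n),
        p (Quot.mk _ (Fin.snoc g' k)) = x := by
      intro k
      show Quot.mk _ (fun j : Fin n => Fin.snoc g' k j.castSucc) = x
      rw [← hx]
      congr 1
      funext j
      exact Fin.snoc_castSucc _ _ _
    set F : K (Fin.last n) → {y // p y = x} :=
      fun k => ⟨Quot.mk _ (Fin.snoc g' k), hmem k⟩ with hF
    -- F is invariant under right Z-multiplication
    have hinv : ∀ (k : K (Fin.last n)) (z : Z (Fin.last n)), F k = F (k * z) := by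
      intro k z
      apply Subtype.ext
      show Quot.mk _ (Fin.snoc g' k) = Quot.mk _ (Fin.snoc g' (k * z))
      apply Quot.sound
      refine ⟨Fin.snoc (fun j : Fin n => (1 : Z' j)) z, ?_⟩
      have hzz : ∀ j : Fin (n+1), j ≠ Fin.last n →
          (Fin.snoc (fun j : Fin n => (1 : Z' j)) z : ∀ j, Z j) j = 1 := by
        intro j hj
        obtain ⟨j', rfl⟩ := Fin.exists_castSucc_eq.mpr hj
        exact Fin.snoc_castSucc _ _ _
      have hcorr : ∀ l : Fin (n+1),
          bottCorr K Z T φ (Fin.snoc (fun j : Fin n => (1 : Z' j)) z) l = 1 := by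
        intro l
        exact bottCorr_eq_one K Z T φ _ l
          (fun j hj => hzz j (Fin.ne_last_of_lt (lt_of_lt_of_le hj (Fin.le_last l))))
      funext l
      show bottCorr K Z T φ _ l * Fin.snoc g' k l * _ = Fin.snoc g' (k * ↑z) l
      rw [hcorr l, one_mul]
      refine Fin.lastCases ?_ ?_ l
      · simp [Fin.snoc_last]
      · intro i
        have : (Fin.snoc (fun j : Fin n => (1 : Z' j)) z : ∀ j, Z j) i.castSucc = 1 :=
          Fin.snoc_castSucc _ _ _
        rw [this]
        simp [Fin.snoc_castSucc]
    -- descend to the quotient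
    set Fbar : K (Fin.last n) ⧸ Z (Fin.last n) → {y // p y = x} :=
      Quotient.lift F (by
        intro k k' hkk'
        have h1 : k⁻¹ * k' ∈ Z (Fin.last n) := QuotientGroup.leftRel_apply.mp hkk'
        have := hinv k ⟨k⁻¹ * k', h1⟩
        simpa [mul_inv_cancel_left] using this) with hFbar
    refine ⟨(Equiv.ofBijective Fbar ⟨?_, ?_⟩).symm⟩
    · -- injective
      intro a b
      refine Quotient.inductionOn₂ a b ?_
      intro k k' h
      have h2 : Quot.mk (bottRel K Z T φ) (Fin.snoc g' k)
          = Quot.mk (bottRel K Z T φ) (Fin.snoc g' k') := congrArg Subtype.val h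
      rw [Quot.eq] at h2
      obtain ⟨z, hz⟩ := equivBig.eqvGen_iff.mp h2
      -- freeness: z vanishes below the last coordinate
      have hz1N : ∀ N : ℕ, ∀ j : Fin (n+1), (j : ℕ) = N → j ≠ Fin.last n → z j = 1 := by
        intro N
        induction N using Nat.strong_induction_on with
        | _ N ih =>
          rintro j rfl hj
          obtain ⟨j', rfl⟩ := Fin.exists_castSucc_eq.mpr hj
          have hcorr : bottCorr K Z T φ z j'.castSucc = 1 := by
            refine bottCorr_eq_one K Z T φ z j'.castSucc (fun i hi => ih i hi i rfl ?_)
            exact Fin.ne_last_of_lt (lt_of_lt_of_le hi (Fin.castSucc_lt_last j').le)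
          have := congrFun hz j'.castSucc
          simp only [bottAct, hcorr, one_mul, Fin.snoc_castSucc] at this
          have h3 : (z j'.castSucc : K j'.castSucc) = 1 := by
            have h4 : g' j' * (z j'.castSucc : K j'.castSucc) = g' j' * 1 := by
              rw [mul_one, this]
            exact mul_left_cancel h4
          exact Subtype.ext h3
      have hz1 : ∀ j : Fin (n+1), j ≠ Fin.last n → z j = 1 := fun j => hz1N j.val j rfl
      have hcorr : bottCorr K Z T φ z (Fin.last n) = 1 :=
        bottCorr_eq_one K Z T φ z (Fin.last n) (fun i hi => hz1 i (Fin.ne_last_of_lt hi))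
      have hlast := congrFun hz (Fin.last n)
      simp only [bottAct, hcorr, one_mul, Fin.snoc_last] at hlast
      have : k⁻¹ * k' ∈ Z (Fin.last n) := by
        rw [← hlast, ← mul_assoc, inv_mul_cancel, one_mul]
        exact (z (Fin.last n)).2
      exact (QuotientGroup.eq (s := Z (Fin.last n))).mpr this
    · -- surjective
      rintro ⟨y, hy⟩
      obtain ⟨g, rfl⟩ := Quot.exists_rep y
      have h2 : Quot.mk (bottRel K' Z' T' φ') (fun j : Fin n => g j.castSucc)
          = Quot.mk (bottRel K' Z' T' φ') g' := by rw [← hx] at hy; exact hy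
      rw [Quot.eq] at h2
      obtain ⟨z', hz'⟩ := equivSmall.eqvGen_iff.mp h2
      set z : ∀ j : Fin (n+1), Z j := Fin.snoc z' 1 with hzdef
      set k : K (Fin.last n) :=
        bottCorr K Z T φ z (Fin.last n) * g (Fin.last n) with hk
      have hact : bottAct K Z T φ g z = Fin.snoc g' k := by
        funext l
        refine Fin.lastCases ?_ ?_ l
        · show bottCorr K Z T φ z (Fin.last n) * g (Fin.last n) * ((z (Fin.last n) : Z _) : K _)
            = Fin.snoc g' k (Fin.last n)
          have : z (Fin.last n) = 1 := Fin.snoc_last _ _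
          rw [this, Fin.snoc_last]
          simp [hk]
        · intro i
          have hzi : z i.castSucc = z' i := Fin.snoc_castSucc _ _ _
          show bottCorr K Z T φ z i.castSucc * g i.castSucc * ((z i.castSucc : Z _) : K _)
            = Fin.snoc g' k i.castSucc
          rw [Fin.snoc_castSucc, ← hz']
          have hzr : (fun j : Fin n => z j.castSucc) = z' := by
            funext j; exact Fin.snoc_castSucc _ _ _
          have hcorr := bottCorr_castSucc K Z T φ z i
          rw [hzr] at hcorr
          show _ = bottCorr K' Z' T' φ' z' i * g i.castSucc * ((z' i : Z' i) : K' i)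
          rw [hcorr, hzi]
      refine ⟨QuotientGroup.mk k, ?_⟩
      apply Subtype.ext
      show Quot.mk _ (Fin.snoc g' k) = Quot.mk _ g
      exact (Quot.sound ⟨z, hact⟩).symm
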